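/- Let G be a group with a finite generating set X. Then (G,X) has the asynchronous loop shortening property if and only if (G,X) has the synchronous loop shortening property. -/

import Mathlib

/-! Basic notions for a group `G` with a generating set `X`:
words over `X ∪ X⁻¹`, the word metric, paths, loops and fellow traveling. -/

namespace LoopShortening

variable {G : Type*} [Group G]

/-- `w` is a word over `X ∪ X⁻¹`: every letter of `w` lies in `X ∪ X⁻¹`. -/
def IsWord (X : Set G) (w : List G) : Prop := ∀ x ∈ w, x ∈ X ∨ x⁻¹ ∈ X

/-- The word metric with respect to `X`: `wdist X g h` is the least `n` such that
`g⁻¹h` is a product of `n` elements of `X ∪ X⁻¹`. -/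
noncomputable def wdist (X : Set G) (g h : G) : ℕ :=
  sInf {n : ℕ | ∃ l : List G, IsWord X l ∧ l.length = n ∧ g * l.prod = h}

/-- The point at time `t ∈ ℕ` along the path based at `g₀` labelled by the word `w`;
for `t ≥ |w|` this is the endpoint of the path. -/
def pathAt (g₀ : G) (w : List G) (t : ℕ) : G := g₀ * (w.take t).prod

/-- The word `w` labels a loop (its evaluation in `G` is the identity, so the
path it labels ends where it starts). -/
def IsLoop (w : List G) : Prop := w.prod = 1

/-- The paths based at `g₀` and `h₀` labelled by `w` and `u` synchronously
`k`-fellow travel. -/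
def SyncFellow (X : Set G) (k : ℕ) (g₀ : G) (w : List G) (h₀ : G) (u : List G) : Prop :=
  ∀ t : ℕ, wdist X (pathAt g₀ w t) (pathAt h₀ u t) ≤ k

/-- The paths based at `g₀` and `h₀` labelled by `w` and `u` asynchronously
`k`-fellow travel: there is a nondecreasing unbounded reparameterization `φ`. -/
def AsyncFellow (X : Set G) (k : ℕ) (g₀ : G) (w : List G) (h₀ : G) (u : List G) : Prop :=
  ∃ φ : ℕ → ℕ, Monotone φ ∧ (∀ m : ℕ, ∃ t : ℕ, m ≤ φ t) ∧
    ∀ t : ℕ, wdist X (pathAt g₀ w t) (pathAt h₀ u (φ t)) ≤ k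

/-- `(G,X)` has the synchronous loop shortening property: there is `k > 0` such that
every nonempty loop is synchronously `k`-fellow traveled by a strictly shorter loop. -/
def SyncLSP (X : Set G) : Prop :=
  ∃ k : ℕ, 0 < k ∧ ∀ (g₀ : G) (w : List G), IsWord X w → IsLoop w → w ≠ [] →
    ∃ (h₀ : G) (u : List G), IsWord X u ∧ IsLoop u ∧ u.length < w.length ∧
      SyncFellow X k g₀ w h₀ u

/-- `(G,X)` has the asynchronous loop shortening property. -/
def AsyncLSP (X : Set G) : Prop :=
  ∃ k : ℕ, 0 < k ∧ ∀ (g₀ : G) (w : List G), IsWord X w → IsLoop w → w ≠ [] →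
    ∃ (h₀ : G) (u : List G), IsWord X u ∧ IsLoop u ∧ u.length < w.length ∧
      AsyncFellow X k g₀ w h₀ u

section Aux


variable (X : Set G)

theorem isWord_nil : IsWord X ([] : List G) := fun x hx => absurd hx List.not_mem_nil

theorem isWord_append {l₁ l₂ : List G} (h₁ : IsWord X l₁) (h₂ : IsWord X l₂) :
    IsWord X (l₁ ++ l₂) := fun x hx => (List.mem_append.1 hx).elim (h₁ x) (h₂ x)

theorem isWord_of_subset {l l' : List G} (hsub : l' ⊆ l) (h : IsWord X l) : IsWord X l' :=
  fun x hx => h x (hsub hx)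

theorem isWord_invRev {l : List G} (h : IsWord X l) : IsWord X ((l.map (·⁻¹)).reverse) := by
  intro x hx
  rw [List.mem_reverse] at hx
  obtain ⟨y, hy, rfl⟩ := List.mem_map.1 hx
  rcases h y hy with h' | h'
  · right; rwa [inv_inv]
  · left; exact h'

theorem prod_invRev (l : List G) : ((l.map (·⁻¹)).reverse).prod = l.prod⁻¹ := by
  induction l with
  | nil => simp
  | cons x t ih => simp [ih, mul_inv_rev]

theorem wdist_le_of_word {g h : G} {l : List G} (hl : IsWord X l) (he : g * l.prod = h) :
    wdist X g h ≤ l.length := Nat.sInf_le ⟨l, hl, rfl, he⟩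

theorem wdist_self (g : G) : wdist X g g = 0 :=
  Nat.le_zero.1 (wdist_le_of_word X (isWord_nil X) (by simp))

theorem exists_word_prod (hgen : Subgroup.closure X = ⊤) (g : G) :
    ∃ l : List G, IsWord X l ∧ l.prod = g := by
  let S : Subgroup G :=
  { carrier := {g | ∃ l : List G, IsWord X l ∧ l.prod = g}
    one_mem' := ⟨[], isWord_nil X, rfl⟩
    mul_mem' := by
      rintro a b ⟨l₁, h₁, rfl⟩ ⟨l₂, h₂, rfl⟩
      exact ⟨l₁ ++ l₂, isWord_append X h₁ h₂, List.prod_append⟩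
    inv_mem' := by
      rintro a ⟨l, hl, rfl⟩
      exact ⟨(l.map (·⁻¹)).reverse, isWord_invRev X hl, prod_invRev l⟩ }
  have hX : X ⊆ S := by
    intro x hx
    exact ⟨[x], by intro y hy; rw [List.mem_singleton] at hy; subst hy; exact Or.inl hx, by simp⟩
  have : g ∈ S := (Subgroup.closure_le S).2 hX (hgen ▸ Subgroup.mem_top g)
  exact this

theorem exists_word_wdist (hgen : Subgroup.closure X = ⊤) (g h : G) :
    ∃ l : List G, IsWord X l ∧ l.length = wdist X g h ∧ g * l.prod = h := by
  have hne : {n : ℕ | ∃ l : List G, IsWord X l ∧ l.length = n ∧ g * l.prod = h}.Nonempty := by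
    obtain ⟨l, hl, hp⟩ := exists_word_prod X hgen (g⁻¹ * h)
    exact ⟨l.length, l, hl, rfl, by rw [hp]; group⟩
  exact Nat.sInf_mem hne

theorem wdist_symm (hgen : Subgroup.closure X = ⊤) (g h : G) : wdist X g h = wdist X h g := by
  have key : ∀ a b : G, wdist X a b ≤ wdist X b a := by
    intro a b
    obtain ⟨l, hl, hlen, he⟩ := exists_word_wdist X hgen b a
    have he' : a * ((l.map (·⁻¹)).reverse).prod = b := by
      rw [prod_invRev]
      have : l.prod = b⁻¹ * a := by rw [← he]; group
      rw [this]; group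
    have := wdist_le_of_word X (isWord_invRev X hl) he'
    simpa [hlen] using this
  exact le_antisymm (key g h) (key h g)

theorem wdist_triangle (hgen : Subgroup.closure X = ⊤) (a b c : G) :
    wdist X a c ≤ wdist X a b + wdist X b c := by
  obtain ⟨l₁, h₁, len₁, e₁⟩ := exists_word_wdist X hgen a b
  obtain ⟨l₂, h₂, len₂, e₂⟩ := exists_word_wdist X hgen b c
  have := wdist_le_of_word X (isWord_append X h₁ h₂)
    (show a * (l₁ ++ l₂).prod = c by rw [List.prod_append, ← mul_assoc, e₁, e₂])
  simpa [len₁, len₂] using this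

theorem pathAt_zero (g : G) (w : List G) : pathAt g w 0 = g := by simp [pathAt]

theorem pathAt_add (g : G) (w : List G) (t r : ℕ) :
    pathAt g w (t + r) = pathAt g w t * ((w.drop t).take r).prod := by
  rw [pathAt, pathAt, List.take_add, List.prod_append, mul_assoc]

theorem pathAt_of_le (g : G) (w : List G) {t : ℕ} (h : w.length ≤ t) :
    pathAt g w t = g * w.prod := by rw [pathAt, List.take_of_length_le h]

theorem pathAt_min (g : G) (l : List G) (s : ℕ) :
    pathAt g l (min s l.length) = pathAt g l s := by
  rcases le_total s l.length with h | h
  · rw [min_eq_left h]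
  · rw [min_eq_right h, pathAt_of_le g l le_rfl, pathAt_of_le g l h]

theorem pathAt_take (g : G) (w : List G) {t c : ℕ} (h : t ≤ c) :
    pathAt g (w.take c) t = pathAt g w t := by
  rw [pathAt, pathAt, List.take_take, min_eq_left h]

theorem pathAt_append (g : G) (p q : List G) (t : ℕ) :
    pathAt g (p ++ q) t = pathAt (pathAt g p t) q (t - p.length) := by
  rw [pathAt, pathAt, pathAt, List.take_append, List.prod_append, mul_assoc]

theorem pathAt_drop (g : G) (w : List G) (j r : ℕ) :
    pathAt (pathAt g w j) (w.drop j) r = pathAt g w (j + r) := (pathAt_add g w j r).symm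

/-- distance between two points on the same path -/
theorem wdist_pathAt_pathAt {w : List G} (hw : IsWord X w) (g : G) {s t : ℕ} (hst : s ≤ t) :
    wdist X (pathAt g w s) (pathAt g w t) ≤ t - s := by
  obtain ⟨r, rfl⟩ := Nat.exists_eq_add_of_le hst
  rw [pathAt_add]
  have h1 : IsWord X ((w.drop s).take r) :=
    isWord_of_subset X (fun x hx => (List.drop_subset s w) (List.take_subset r (w.drop s) hx)) hw
  refine (wdist_le_of_word X h1 rfl).trans ?_
  have := (List.length_take : (List.take r (w.drop s)).length = _)
  omega

/-- distance from basepoint of a path to a point on it -/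
theorem wdist_pathAt_self {l : List G} (hl : IsWord X l) (g : G) (r : ℕ) :
    wdist X g (pathAt g l r) ≤ l.length := by
  have := wdist_pathAt_pathAt X hl g (Nat.zero_le r)
  rw [pathAt_zero] at this
  rcases le_total r l.length with h | h
  · omega
  · rw [pathAt_of_le g l h]
    have h2 := wdist_pathAt_pathAt X hl g (le_refl l.length)
    rw [pathAt_of_le g l le_rfl] at h2
    have h3 := wdist_pathAt_pathAt X hl g (Nat.zero_le l.length)
    rw [pathAt_zero, pathAt_of_le g l le_rfl] at h3
    omega

end Aux

/-- For a group `G` with finite generating set `X`, the asynchronous loop shortening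
property holds if and only if the synchronous loop shortening property holds. -/
theorem asyncLSP_iff_syncLSP {G : Type*} [Group G] (X : Set G) (hfin : X.Finite)
    (hgen : Subgroup.closure X = ⊤) :
    AsyncLSP X ↔ SyncLSP X := by
  constructor
  · rintro ⟨k, hk, H⟩
    refine ⟨4 * k + 4, by omega, ?_⟩
    intro g₀ w hw hl hne
    obtain ⟨h₀, u, hu, hul, hlen, φ, hφm, hφub, hφd⟩ := H g₀ w hw hl hne
    classical
    set n := w.length with hn
    set m := u.length with hm
    set J := 2 * k + 2 with hJ
    set ψ : ℕ → ℕ := fun t => min (φ t) m with hψ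
    have hψm : Monotone ψ := fun a b hab => min_le_min (hφm hab) le_rfl
    have hψle : ∀ t, ψ t ≤ m := fun t => min_le_right _ _
    have hψd : ∀ t, wdist X (pathAt g₀ w t) (pathAt h₀ u (ψ t)) ≤ k := by
      intro t
      have : pathAt h₀ u (ψ t) = pathAt h₀ u (φ t) := pathAt_min h₀ u (φ t)
      rw [this]; exact hφd t
    have hg0h0 : wdist X g₀ h₀ ≤ k := by
      obtain ⟨T, hT⟩ := hφub m
      have h1 := hφd (max n T)
      have e1 : pathAt g₀ w (max n T) = g₀ := by
        rw [pathAt_of_le g₀ w (le_max_left n T), hl, mul_one]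
      have e2 : pathAt h₀ u (φ (max n T)) = h₀ := by
        rw [pathAt_of_le h₀ u (hT.trans (hφm (le_max_right n T))), hul, mul_one]
      rwa [e1, e2] at h1
    by_cases hA : ∃ t, t ≤ n ∧ ∃ s, s ≤ t ∧ s + ψ t + J ≤ t + ψ s
    · -- CASE A : splice construction
      set t' := Nat.find hA with ht'def
      obtain ⟨ht'n, s₀, hs₀le, hs₀⟩ : t' ≤ n ∧ ∃ s, s ≤ t' ∧ s + ψ t' + J ≤ t' + ψ s :=
        Nat.find_spec hA
      have hmin : ∀ t, t < t' → ¬(t ≤ n ∧ ∃ s, s ≤ t ∧ s + ψ t + J ≤ t + ψ s) :=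
        fun t h => Nat.find_min hA h
      obtain ⟨c, hcmem, hcmax⟩ := Finset.exists_max_image (Finset.range (t' + 1))
        (fun s => (ψ s : ℤ) - s) ⟨0, Finset.mem_range.2 (by omega)⟩
      have hct' : c ≤ t' := by have := Finset.mem_range.1 hcmem; omega
      have hmaxN : ∀ s, s ≤ t' → c + ψ s ≤ s + ψ c := by
        intro s hs
        have := hcmax s (Finset.mem_range.2 (by omega))
        omega
      have hdge : c + ψ t' + J ≤ t' + ψ c := by
        have h1 := hmaxN s₀ hs₀le
        omega
      have hbe : ψ c ≤ ψ t' := hψm hct'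
      have hcJ : c + J ≤ t' := by omega
      have hdle : t' + ψ c ≤ c + ψ t' + J := by
        have h1 := hmin (t' - 1) (by omega)
        push_neg at h1
        have h2 := h1 (by omega) c (by omega)
        have h3 : ψ (t' - 1) ≤ ψ t' := hψm (by omega)
        omega
      obtain ⟨a, ha⟩ : ∃ a, ψ t' = ψ c + a := ⟨ψ t' - ψ c, by omega⟩
      have ht'eq : t' = c + a + J := by omega
      have hem : ψ t' ≤ m := hψle t'
      have hwin₂ : ∀ t, c ≤ t → t < t' → t + ψ c ≤ c + ψ t + J := by
        intro t hct htt
        have h1 := hmin t htt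
        push_neg at h1
        have h2 := h1 (by omega) c hct
        omega
      obtain ⟨β₁, hβ₁w, hβ₁len, hβ₁e⟩ :=
        exists_word_wdist X hgen (pathAt g₀ w c) (pathAt h₀ u (ψ c))
      have hb₁ : β₁.length ≤ k := by rw [hβ₁len]; exact hψd c
      obtain ⟨β₂, hβ₂w, hβ₂len, hβ₂e⟩ :=
        exists_word_wdist X hgen (pathAt h₀ u (ψ t')) (pathAt g₀ w t')
      have hb₂ : β₂.length ≤ k := by rw [hβ₂len, wdist_symm X hgen]; exact hψd t'
      set seg := (u.drop (ψ c)).take a with hsegdef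
      set tl := w.drop t' with htldef
      set v := w.take c ++ (β₁ ++ (seg ++ (β₂ ++ tl))) with hv
      have hlc : (w.take c).length = c := by rw [List.length_take]; omega
      have hlseg : seg.length = a := by
        rw [hsegdef, List.length_take, List.length_drop]; omega
      have hltl : tl.length = n - t' := by rw [htldef, List.length_drop]
      have hvlen : v.length = c + (β₁.length + (a + (β₂.length + (n - t')))) := by
        simp [hv, List.length_append, hlc, hlseg, hltl]
      have hvlt : v.length < n := by rw [hvlen]; omega
      have hvw : IsWord X v :=
        isWord_append X (isWord_of_subset X (List.take_subset _ _) hw)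
          (isWord_append X hβ₁w
            (isWord_append X
              (isWord_of_subset X
                (fun x hx => (List.drop_subset _ _) (List.take_subset _ _ hx)) hu)
              (isWord_append X hβ₂w (isWord_of_subset X (List.drop_subset _ _) hw))))
      have hpseg : pathAt h₀ u (ψ c) * seg.prod = pathAt h₀ u (ψ t') := by
        rw [hsegdef, ← pathAt_add h₀ u (ψ c) a, ← ha]
      have hptl : pathAt g₀ w t' * tl.prod = g₀ := by
        have h1 : tl.prod = ((w.drop t').take (n - t')).prod := by
          rw [htldef, List.take_of_length_le (by rw [List.length_drop])]
        rw [h1, ← pathAt_add g₀ w t' (n - t'),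
          pathAt_of_le g₀ w (by omega), hl, mul_one]
      have hvloop : IsLoop v := by
        have key : g₀ * v.prod = g₀ * 1 := by
          rw [hv]
          simp only [List.prod_append, ← mul_assoc, mul_one]
          have e1 : g₀ * (w.take c).prod = pathAt g₀ w c := rfl
          rw [e1, hβ₁e, hpseg, hβ₂e, hptl]
        exact mul_left_cancel key
      refine ⟨g₀, v, hvw, hvloop, hvlt, ?_⟩
      intro t
      have heval : pathAt g₀ v t =
          pathAt (pathAt (pathAt (pathAt (pathAt g₀ (w.take c) t) β₁ (t - c)) seg
            (t - c - β₁.length)) β₂ (t - c - β₁.length - a)) tl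
            (t - c - β₁.length - a - β₂.length) := by
        rw [hv, pathAt_append, pathAt_append, pathAt_append, pathAt_append, hlc, hlseg]
      rcases le_or_gt t c with h1 | h1
      · -- range 1 : t ≤ c
        rw [heval, pathAt_take g₀ w h1, show t - c = 0 by omega]
        simp only [Nat.zero_sub, pathAt_zero]
        simp [wdist_self]
      · have e1 : pathAt g₀ (w.take c) t = pathAt g₀ w c := by
          rw [pathAt_of_le g₀ (w.take c) (by omega : (w.take c).length ≤ t)]; rfl
        rcases le_or_gt t (c + β₁.length) with h2 | h2
        · -- range 2 : c < t ≤ c + |β₁|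
          rw [heval, e1, show t - c - β₁.length = 0 by omega]
          simp only [Nat.zero_sub, pathAt_zero]
          have A0 := wdist_triangle X hgen (pathAt g₀ w t) (pathAt g₀ w c)
            (pathAt (pathAt g₀ w c) β₁ (t - c))
          have A1 : wdist X (pathAt g₀ w t) (pathAt g₀ w c) ≤ t - c := by
            rw [wdist_symm X hgen]
            exact wdist_pathAt_pathAt X hw g₀ (by omega)
          have A2 := wdist_pathAt_self X hβ₁w (pathAt g₀ w c) (t - c)
          omega
        · have e2 : pathAt (pathAt g₀ w c) β₁ (t - c) = pathAt h₀ u (ψ c) := by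
            rw [pathAt_of_le _ β₁ (by omega : β₁.length ≤ t - c)]; exact hβ₁e
          rcases le_or_gt t (c + β₁.length + a) with h3 | h3
          · -- range 3 : on the u-segment
            have e3 : pathAt (pathAt h₀ u (ψ c)) seg (t - c - β₁.length) =
                pathAt h₀ u (ψ c + (t - c - β₁.length)) := by
              rw [hsegdef]
              show pathAt h₀ u (ψ c) * (((u.drop (ψ c)).take a).take (t - c - β₁.length)).prod = _
              rw [List.take_take, min_eq_left (by omega : t - c - β₁.length ≤ a)]
              exact (pathAt_add h₀ u (ψ c) (t - c - β₁.length)).symm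
            rw [heval, e1, e2, e3, show t - c - β₁.length - a = 0 by omega]
            simp only [Nat.zero_sub, pathAt_zero]
            have A0 := wdist_triangle X hgen (pathAt g₀ w t) (pathAt h₀ u (ψ t))
              (pathAt h₀ u (ψ c + (t - c - β₁.length)))
            have A1 := hψd t
            have w1 := hmaxN t (by omega)
            have w2 := hwin₂ t (by omega) (by omega)
            have A2 : wdist X (pathAt h₀ u (ψ t))
                (pathAt h₀ u (ψ c + (t - c - β₁.length))) ≤ J := by
              rcases le_total (ψ t) (ψ c + (t - c - β₁.length)) with h | h
              · have := wdist_pathAt_pathAt X hu h₀ h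
                omega
              · have := wdist_pathAt_pathAt X hu h₀ h
                rw [wdist_symm X hgen] at this
                omega
            omega
          · have e3 : pathAt (pathAt h₀ u (ψ c)) seg (t - c - β₁.length) =
                pathAt h₀ u (ψ t') := by
              rw [pathAt_of_le _ seg (by omega : seg.length ≤ t - c - β₁.length)]
              exact hpseg
            rcases le_or_gt t (c + β₁.length + a + β₂.length) with h4 | h4
            · -- range 4 : on β₂
              rw [heval, e1, e2, e3, show t - c - β₁.length - a - β₂.length = 0 by omega,
                pathAt_zero]
              have A0 := wdist_triangle X hgen (pathAt g₀ w t) (pathAt g₀ w t')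
                (pathAt (pathAt h₀ u (ψ t')) β₂ (t - c - β₁.length - a))
              have A1 : wdist X (pathAt g₀ w t) (pathAt g₀ w t') ≤ t' - t :=
                wdist_pathAt_pathAt X hw g₀ (by omega)
              have A2 := wdist_triangle X hgen (pathAt g₀ w t') (pathAt h₀ u (ψ t'))
                (pathAt (pathAt h₀ u (ψ t')) β₂ (t - c - β₁.length - a))
              have A3 := hψd t'
              have A4 := wdist_pathAt_self X hβ₂w (pathAt h₀ u (ψ t'))
                (t - c - β₁.length - a)
              omega
            · -- range 5 : on the tail of w
              have e4 : pathAt (pathAt h₀ u (ψ t')) β₂ (t - c - β₁.length - a) =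
                  pathAt g₀ w t' := by
                rw [pathAt_of_le _ β₂ (by omega : β₂.length ≤ t - c - β₁.length - a)]
                exact hβ₂e
              have e5 : pathAt (pathAt g₀ w t') tl (t - c - β₁.length - a - β₂.length) =
                  pathAt g₀ w (t' + (t - c - β₁.length - a - β₂.length)) := by
                rw [htldef]; exact pathAt_drop g₀ w t' _
              rw [heval, e1, e2, e3, e4, e5]
              have A1 := wdist_pathAt_pathAt X hw g₀
                (show t ≤ t' + (t - c - β₁.length - a - β₂.length) by omega)
              omega

    · -- CASE B : u itself synchronously fellow travels
      push_neg at hA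
      refine ⟨h₀, u, hu, hul, hlen, ?_⟩
      intro t
      rcases le_or_gt t n with htn | htn
      · have hup : ψ t ≤ t + J - 2 := by
          have h1 := hA n le_rfl t htn
          have h2 := hψle n
          omega
        have hdown : t ≤ ψ t + J - 1 := by
          have h1 := hA t htn 0 (Nat.zero_le t)
          omega
        have tri := wdist_triangle X hgen (pathAt g₀ w t) (pathAt h₀ u (ψ t)) (pathAt h₀ u t)
        have h3 : wdist X (pathAt h₀ u (ψ t)) (pathAt h₀ u t) ≤ J - 1 := by
          rcases le_total (ψ t) t with h | h
          · have := wdist_pathAt_pathAt X hu h₀ h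
            omega
          · have := wdist_pathAt_pathAt X hu h₀ h
            rw [wdist_symm X hgen] at this
            omega
        have := hψd t
        omega
      · have e1 : pathAt g₀ w t = g₀ := by
          rw [pathAt_of_le g₀ w (le_of_lt htn), hl, mul_one]
        have e2 : pathAt h₀ u t = h₀ := by
          rw [pathAt_of_le h₀ u (by omega), hul, mul_one]
        rw [e1, e2]
        omega
  · rintro ⟨k, hk, H⟩
    refine ⟨k, hk, ?_⟩
    intro g₀ w hw hl hne
    obtain ⟨h₀, u, hu, hul, hlen, hsync⟩ := H g₀ w hw hl hne
    exact ⟨h₀, u, hu, hul, hlen, fun t => t, fun a b hab => hab,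
      fun m => ⟨m, le_rfl⟩, hsync⟩


end LoopShortening
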